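/- There exists an absolute constant C > 0 such that if A ⊂ ℝ is a finite convex set and P ⊆ A is an arithmetic progression (a set of the form {x, x+d, …, x+(m−1)d} with d ≠ 0), then |P| ≤ C·|A|^{1/2}. -/

import Mathlib

/-- A finite set `A ⊆ ℝ` is *convex* if, listing its elements in increasing order,
the consecutive differences form a strictly increasing sequence. -/
def IsConvexSet (A : Finset ℝ) : Prop :=
  ∀ i : ℕ, i + 2 < A.card →
    (A.sort (· ≤ ·)).getD (i + 1) 0 - (A.sort (· ≤ ·)).getD i 0 <
      (A.sort (· ≤ ·)).getD (i + 2) 0 - (A.sort (· ≤ ·)).getD (i + 1) 0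

/-- `P` is an arithmetic progression of length `m` with nonzero common difference. -/
def IsAPOfLength (P : Finset ℝ) (m : ℕ) : Prop :=
  ∃ x d : ℝ, d ≠ 0 ∧ P = (Finset.range m).image fun i : ℕ => x + (i : ℝ) * d

lemma gauss_aux : ∀ N : ℕ, 2 * (∑ j ∈ Finset.range N, (N - j)) = N * (N + 1) := by
  intro N
  induction N with
  | zero => simp
  | succ N ih =>
    have h1 : ∑ j ∈ Finset.range (N + 1), (N + 1 - j)
        = (∑ j ∈ Finset.range N, (N - j)) + (N + 1) := by
      rw [Finset.sum_range_succ]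
      have : ∀ j ∈ Finset.range N, N + 1 - j = (N - j) + 1 := by
        intro j hj; rw [Finset.mem_range] at hj; omega
      rw [Finset.sum_congr rfl this, Finset.sum_add_distrib, Finset.sum_const,
        Finset.card_range, smul_eq_mul]
      omega
    rw [h1, Nat.mul_add, ih]; ring

lemma key_lemma (A : Finset ℝ) (hA : IsConvexSet A) (m : ℕ) (hm : 3 ≤ m) (x d : ℝ)
    (hd : 0 < d)
    (hsub : ((Finset.range m).image fun i : ℕ => x + (i : ℝ) * d) ⊆ A) :
    m * (m - 1) ≤ 2 * A.card := by
  set n := A.card with hn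
  set L := A.sort (· ≤ ·) with hL
  have hlen : L.length = n := Finset.length_sort _
  set a : ℕ → ℝ := fun i => L.getD i 0 with ha_def
  have hsortlt : L.Pairwise (· < ·) := (Finset.sortedLT_sort A).pairwise
  have ha : ∀ i j : ℕ, i < j → j < n → a i < a j := by
    intro i j hij hj
    have hj' : j < L.length := by omega
    have hi : i < L.length := by omega
    have := List.pairwise_iff_getElem.mp hsortlt i j hi hj' hij
    show L.getD i 0 < L.getD j 0
    rw [List.getD_eq_getElem L 0 hi, List.getD_eq_getElem L 0 hj']
    exact this
  set g : ℕ → ℝ := fun i => a (i + 1) - a i with hg_def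
  have hg : ∀ i, i + 2 < n → g i < g (i + 1) := by
    intro i hi
    have := hA i hi
    simpa [hg_def, ha_def] using this
  have gpos : ∀ i, i + 1 < n → 0 < g i := by
    intro i hi
    exact sub_pos.mpr (ha i (i + 1) (Nat.lt_succ_self _) hi)
  have gmono : ∀ i j : ℕ, i < j → j + 1 < n → g i < g j := by
    intro i j hij hjn
    obtain ⟨k, rfl⟩ : ∃ k, j = i + 1 + k := ⟨j - i - 1, by omega⟩
    clear hij
    induction k with
    | zero => exact hg i (by omega)
    | succ k ih =>
      have h1 : g i < g (i + 1 + k) := ih (by omega)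
      have h2 : g (i + 1 + k) < g (i + 1 + k + 1) := hg (i + 1 + k) (by omega)
      calc g i < g (i + 1 + k) := h1
        _ < g (i + 1 + (k + 1)) := h2
  set f : ℕ → ℕ := fun j => L.idxOf (x + (j : ℝ) * d) with hf_def
  have hmem : ∀ j, j < m → (x + (j : ℝ) * d) ∈ L := by
    intro j hj
    rw [hL, Finset.mem_sort]
    exact hsub (Finset.mem_image.mpr ⟨j, Finset.mem_range.mpr hj, rfl⟩)
  have hflt : ∀ j, j < m → f j < n := by
    intro j hj
    rw [← hlen]
    exact List.idxOf_lt_length_iff.mpr (hmem j hj)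
  have haf : ∀ j, j < m → a (f j) = x + (j : ℝ) * d := by
    intro j hj
    have h1 : f j < L.length := by rw [hlen]; exact hflt j hj
    simp only [ha_def, List.getD_eq_getElem _ _ h1]
    exact List.getElem_idxOf h1
  have hfmono : ∀ j j' : ℕ, j < j' → j' < m → f j < f j' := by
    intro j j' hjj hj'
    by_contra hcon
    push_neg at hcon
    have h1 : a (f j) < a (f j') := by
      rw [haf j (by omega), haf j' hj']
      have : (j : ℝ) < (j' : ℝ) := by exact_mod_cast hjj
      nlinarith
    have h2 : a (f j') ≤ a (f j) := by
      rcases eq_or_lt_of_le hcon with heq | hlt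
      · rw [heq]
      · exact (ha (f j') (f j) hlt (hflt j (by omega))).le
    linarith
  have hsum : ∀ j, j + 1 < m → ∑ i ∈ Finset.Ico (f j) (f (j + 1)), g i = d := by
    intro j hj
    have tele : ∀ N : ℕ, ∑ i ∈ Finset.range N, g i = a N - a 0 := by
      intro N
      exact Finset.sum_range_sub a N
    rw [Finset.sum_Ico_eq_sub _ (hfmono j (j + 1) (Nat.lt_succ_self _) hj).le, tele, tele,
      haf j (by omega), haf (j + 1) hj]
    push_cast
    ring
  set k : ℕ → ℕ := fun j => f (j + 1) - f j with hk_def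
  have hk1 : ∀ j, j + 1 < m → 1 ≤ k j := by
    intro j hj
    have := hfmono j (j + 1) (Nat.lt_succ_self _) hj
    simp only [hk_def]
    omega
  have hkcard : ∀ j, j + 1 < m → (Finset.Ico (f j) (f (j + 1))).card = k j := by
    intro j hj
    simp only [hk_def, Nat.card_Ico]
  have hkdec : ∀ j, j + 2 < m → k (j + 1) < k j := by
    intro j hj
    set q := f (j + 1) with hq_def
    have hq1 : 1 ≤ q := by
      have := hfmono j (j + 1) (Nat.lt_succ_self _) (by omega)
      omega
    have hqn : q < n := hflt (j + 1) (by omega)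
    have hq2n : f (j + 2) < n := hflt (j + 2) hj
    have hqlt : q < f (j + 2) := hfmono (j + 1) (j + 2) (Nat.lt_succ_self _) hj
    set G := g (q - 1) with hG_def
    have hGpos : 0 < G := gpos (q - 1) (by omega)
    have hGq : G < g q := gmono (q - 1) q (by omega) (by omega)
    have hupper : d ≤ (k j : ℝ) * G := by
      rw [← hsum j (by omega)]
      calc ∑ i ∈ Finset.Ico (f j) q, g i ≤ ∑ _i ∈ Finset.Ico (f j) q, G := by
            apply Finset.sum_le_sum
            intro i hi
            rw [Finset.mem_Ico] at hi
            rcases eq_or_lt_of_le (Nat.le_sub_one_of_lt hi.2) with heq | hlt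
            · rw [heq]
            · exact (gmono i (q - 1) hlt (by omega)).le
        _ = (k j : ℝ) * G := by
            rw [Finset.sum_const, hkcard j (by omega), nsmul_eq_mul]
    have hlow : (k (j + 1) : ℝ) * g q ≤ d := by
      rw [← hsum (j + 1) (by omega)]
      calc (k (j + 1) : ℝ) * g q
          = ∑ _i ∈ Finset.Ico q (f (j + 2)), g q := by
            rw [Finset.sum_const, hkcard (j + 1) (by omega), nsmul_eq_mul]
        _ ≤ ∑ i ∈ Finset.Ico q (f (j + 2)), g i := by
            apply Finset.sum_le_sum
            intro i hi
            rw [Finset.mem_Ico] at hi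
            rcases eq_or_lt_of_le hi.1 with heq | hlt
            · rw [← heq]
            · exact (gmono q i hlt (by omega)).le
    have hk1' : 1 ≤ k (j + 1) := hk1 (j + 1) (by omega)
    have hstep : (k (j + 1) : ℝ) * G < (k j : ℝ) * G := by
      have h1 : (k (j + 1) : ℝ) * G < (k (j + 1) : ℝ) * g q := by
        apply mul_lt_mul_of_pos_left hGq
        exact_mod_cast hk1'
      linarith
    have := (mul_lt_mul_iff_left₀ hGpos).mp hstep
    exact_mod_cast this
  have hklb : ∀ j, j + 1 < m → m - 1 - j ≤ k j := by
    have aux : ∀ s : ℕ, ∀ j, j + 1 < m → m - 1 - j ≤ s → m - 1 - j ≤ k j := by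
      intro s
      induction s with
      | zero => intro j h h0; omega
      | succ s ih =>
        intro j h hle
        by_cases hc : m - 1 - j ≤ s
        · exact ih j h hc
        by_cases hc2 : j + 2 < m
        · have h1 := hkdec j hc2
          have h2 := ih (j + 1) (by omega) (by omega)
          omega
        · have := hk1 j h
          omega
    intro j h
    exact aux (m - 1 - j) j h le_rfl
  have hsumk : ∀ t, t < m → f t = f 0 + ∑ j ∈ Finset.range t, k j := by
    intro t
    induction t with
    | zero => simp
    | succ t ih =>
      intro ht
      have h1 := ih (by omega)
      have h2 := hfmono t (t + 1) (Nat.lt_succ_self _) ht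
      have h3 : k t = f (t + 1) - f t := by simp only [hk_def]
      rw [Finset.sum_range_succ]
      omega
  have h1 : f (m - 1) < n := hflt (m - 1) (by omega)
  have h2 : f (m - 1) = f 0 + ∑ j ∈ Finset.range (m - 1), k j := hsumk (m - 1) (by omega)
  have h3 : ∑ j ∈ Finset.range (m - 1), (m - 1 - j) ≤ ∑ j ∈ Finset.range (m - 1), k j := by
    apply Finset.sum_le_sum
    intro j hj
    rw [Finset.mem_range] at hj
    exact hklb j (by omega)
  have h4 : 2 * ∑ j ∈ Finset.range (m - 1), (m - 1 - j) = (m - 1) * m := by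
    have := gauss_aux (m - 1)
    rw [Nat.sub_add_cancel (by omega)] at this
    exact this
  calc m * (m - 1) = 2 * ∑ j ∈ Finset.range (m - 1), (m - 1 - j) := by
        rw [h4, mul_comm]
    _ ≤ 2 * ∑ j ∈ Finset.range (m - 1), k j := by omega
    _ ≤ 2 * n := by omega

/-- Any arithmetic progression contained in a convex set `A ⊆ ℝ` has length `O(|A|^{1/2})`. -/
theorem AP_in_convex_set_short :
    ∃ C : ℝ, 0 < C ∧ ∀ A : Finset ℝ, IsConvexSet A →
      ∀ P : Finset ℝ, P ⊆ A → (∃ m : ℕ, IsAPOfLength P m) →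
        (P.card : ℝ) ≤ C * (A.card : ℝ) ^ (1 / 2 : ℝ) := by
  refine ⟨2, by norm_num, ?_⟩
  intro A hA P hPA ⟨m, x, d, hd, hP⟩
  set n := A.card with hn
  rw [← Real.sqrt_eq_rpow]
  have hcard : P.card = m := by
    rw [hP, Finset.card_image_of_injective _ ?_, Finset.card_range]
    intro i j hij
    simp only [add_right_inj] at hij
    have : (i : ℝ) = j := mul_right_cancel₀ hd hij
    exact_mod_cast this
  rw [hcard]
  rcases Nat.eq_zero_or_pos m with hm0 | hm1
  · rw [hm0]
    push_cast
    positivity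
  have hAne : 1 ≤ n := by
    have : x + (0 : ℝ) * d ∈ A := by
      apply hPA
      rw [hP]
      exact Finset.mem_image.mpr ⟨0, Finset.mem_range.mpr hm1, by norm_num⟩
    rw [hn]
    exact Finset.card_pos.mpr ⟨_, this⟩
  have hsqrt1 : (1 : ℝ) ≤ Real.sqrt n := by
    rw [show (1 : ℝ) = Real.sqrt 1 by simp]
    exact Real.sqrt_le_sqrt (by exact_mod_cast hAne)
  by_cases hm3 : m < 3
  · calc (m : ℝ) ≤ 2 := by exact_mod_cast Nat.lt_succ_iff.mp hm3
      _ ≤ 2 * Real.sqrt n := by linarith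
  push_neg at hm3
  have hbound : m * (m - 1) ≤ 2 * n := by
    rcases hd.lt_or_gt with hneg | hpos
    · apply key_lemma A hA m hm3 (x + ((m : ℝ) - 1) * d) (-d) (neg_pos.mpr hneg)
      have him : ((Finset.range m).image fun i : ℕ => (x + ((m : ℝ) - 1) * d) + (i : ℝ) * (-d))
          = (Finset.range m).image fun i : ℕ => x + (i : ℝ) * d := by
        ext y
        simp only [Finset.mem_image, Finset.mem_range]
        constructor
        · rintro ⟨i, hi, rfl⟩
          refine ⟨m - 1 - i, by omega, ?_⟩
          have : ((m - 1 - i : ℕ) : ℝ) = (m : ℝ) - 1 - i := by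
            have h1 : i ≤ m - 1 := by omega
            push_cast [Nat.cast_sub h1, Nat.cast_sub (by omega : 1 ≤ m)]
            ring
          rw [this]
          ring
        · rintro ⟨i, hi, rfl⟩
          refine ⟨m - 1 - i, by omega, ?_⟩
          have : ((m - 1 - i : ℕ) : ℝ) = (m : ℝ) - 1 - i := by
            have h1 : i ≤ m - 1 := by omega
            push_cast [Nat.cast_sub h1, Nat.cast_sub (by omega : 1 ≤ m)]
            ring
          rw [this]
          ring
      rw [him, ← hP]
      exact hPA
    · apply key_lemma A hA m hm3 x d hpos
      rw [← hP]
      exact hPA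
  have hboundR : (m : ℝ) * ((m : ℝ) - 1) ≤ 2 * n := by
    have h1 : ((m * (m - 1) : ℕ) : ℝ) ≤ ((2 * n : ℕ) : ℝ) := by exact_mod_cast hbound
    push_cast [Nat.cast_sub (by omega : 1 ≤ m)] at h1
    linarith
  have hhalf : (m : ℝ) / 2 ≤ Real.sqrt n := by
    rw [Real.le_sqrt (by positivity) (by positivity)]
    have hm2 : (2 : ℝ) ≤ (m : ℝ) := by exact_mod_cast (by omega : 2 ≤ m)
    nlinarith
  linarith
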